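/- For all U, V ∈ V, the endomorphism Φ(U,V) is skew-symmetric with respect to the inner product (equivalently Φ(U,V).g = 0) and commutes with J; consequently Φ(U,V) annihilates the Kähler form Ω(X,Y) = ⟪JX,Y⟫ under the derivation action. -/

import Mathlib

open scoped RealInnerProductSpace

noncomputable section

variable {V : Type*} [NormedAddCommGroup V] [InnerProductSpace ℝ V] [FiniteDimensional ℝ V]

/-- The orthogonal projection onto `D`, as a map `V → V`. -/
def projD (D : Submodule ℝ V) (X : V) : V := (D.orthogonalProjection X : V)

/-- The bilinear form `h(X,Y) = ⟪πX, πY⟫`. -/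
def hForm (D : Submodule ℝ V) (X Y : V) : ℝ := ⟪projD D X, projD D Y⟫

/-- The 2-form `ω(X,Y) = h(JX, Y)`. -/
def omForm (J : V →ₗ[ℝ] V) (D : Submodule ℝ V) (X Y : V) : ℝ := hForm D (J X) Y

/-- The standard Kähler curvature-type tensor `Π` of constant holomorphic sectional curvature. -/
def PiT (J : V →ₗ[ℝ] V) (U Vv W : V) : V :=
  (1/4 : ℝ) • (⟪Vv, W⟫ • U - ⟪U, W⟫ • Vv + ⟪J Vv, W⟫ • J U - ⟪J U, W⟫ • J Vv
    - (2 * ⟪J U, Vv⟫) • J W)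

/-- The curvature-type tensor `Φ`. -/
def PhiT (J : V →ₗ[ℝ] V) (D : Submodule ℝ V) (U Vv W : V) : V :=
  (1/8 : ℝ) • (⟪Vv, W⟫ • projD D U - ⟪U, W⟫ • projD D Vv
    + hForm D Vv W • U - hForm D U W • Vv
    + ⟪J Vv, W⟫ • projD D (J U) - ⟪J U, W⟫ • projD D (J Vv)
    + omForm J D Vv W • J U - omForm J D U W • J Vv
    - (2 * ⟪J U, Vv⟫) • projD D (J W) - (2 * omForm J D U Vv) • J W)

/-- The curvature-type tensor `Ψ(U,V)W = −ω(U,V)·J(πW)`. -/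
def PsiT (J : V →ₗ[ℝ] V) (D : Submodule ℝ V) (U Vv W : V) : V :=
  -(omForm J D U Vv) • J (projD D W)

/-- The derivation action of an endomorphism `A` on a bilinear form `T`. -/
def der2 (A : V → V) (T : V → V → ℝ) (X Y : V) : ℝ := -T (A X) Y - T X (A Y)

/-- The derivation action of an endomorphism `A` on a 4-multilinear form `T`. -/
def der4 (A : V → V) (T : V → V → V → V → ℝ) (X Y Z W : V) : ℝ :=
  -T (A X) Y Z W - T X (A Y) Z W - T X Y (A Z) W - T X Y Z (A W)

/-- The 4-form `S₀(X,Y,Z,W) = ⟪S(X,Y)Z, W⟫` associated with an endomorphism-valued 2-form. -/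
def form4 (S : V → V → V → V) (X Y Z W : V) : ℝ := ⟪S X Y Z, W⟫

/-- The 6-multilinear form `(R.S)(U,V,X,Y,Z,W) = (R(U,V).S₀)(X,Y,Z,W)`. -/
def dotRS (R S : V → V → V → V) (U Vv X Y Z W : V) : ℝ :=
  der4 (R U Vv) (form4 S) X Y Z W

section Aux

variable (J : V →ₗ[ℝ] V) (D : Submodule ℝ V)

lemma projD_mem (X : V) : projD D X ∈ D := (D.orthogonalProjection X).2

lemma inner_projD_left (X Y : V) : ⟪projD D X, Y⟫ = ⟪X, projD D Y⟫ :=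
  D.inner_starProjection_left_eq_right X Y

lemma projD_idem (X : V) : projD D (projD D X) = projD D X :=
  Submodule.starProjection_eq_self_iff.2 (projD_mem D X)

lemma projD_J_comm (hJ2 : ∀ X : V, J (J X) = -X)
    (hJg : ∀ X Y : V, ⟪J X, J Y⟫ = ⟪X, Y⟫)
    (hJD : ∀ X ∈ D, J X ∈ D) (X : V) :
    projD D (J X) = J (projD D X) := by
  unfold projD
  apply Submodule.eq_starProjection_of_mem_of_inner_eq_zero (hJD _ (projD_mem D X))
  intro w hw
  have hw' : -(J w) ∈ D := D.neg_mem (hJD _ hw)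
  have hwe : w = J (-(J w)) := by rw [map_neg, hJ2, neg_neg]
  rw [← map_sub, hwe, hJg, real_inner_comm]
  exact (Submodule.sub_starProjection_mem_orthogonal (K := D) X) _ hw'

lemma projD_neg (X : V) : projD D (-X) = -projD D X := by
  unfold projD
  rw [map_neg, Submodule.coe_neg]

lemma hForm_eq (X Y : V) : hForm D X Y = ⟪X, projD D Y⟫ := by
  unfold hForm
  rw [inner_projD_left, projD_idem]

end Aux

theorem stmt_9 {V : Type*} [NormedAddCommGroup V] [InnerProductSpace ℝ V]
    [FiniteDimensional ℝ V]
    (J : V →ₗ[ℝ] V) (hJ2 : ∀ X : V, J (J X) = -X)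
    (hJg : ∀ X Y : V, ⟪J X, J Y⟫ = ⟪X, Y⟫)
    (D : Submodule ℝ V) (hD2 : Module.finrank ℝ ↥D = 2)
    (hJD : ∀ X ∈ D, J X ∈ D) :
    ∀ U Vv : V,
      (∀ X Y : V, ⟪PhiT J D U Vv X, Y⟫ = -⟪X, PhiT J D U Vv Y⟫) ∧
      (∀ W : V, PhiT J D U Vv (J W) = J (PhiT J D U Vv W)) ∧
      (∀ X Y : V, der2 (PhiT J D U Vv) (fun A B => ⟪J A, B⟫) X Y = 0) := by
  have hJskew : ∀ X Y : V, ⟪J X, Y⟫ = -⟪X, J Y⟫ := by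
    intro X Y
    have := hJg X (J Y)
    rw [hJ2] at this
    rw [← this, inner_neg_right, neg_neg]
  have hpJ := projD_J_comm J D hJ2 hJg hJD
  have hA : ∀ a b : V, ⟪a, projD D b⟫ = ⟪b, projD D a⟫ := by
    intro a b
    rw [← inner_projD_left, real_inner_comm]
  have hB : ∀ a b : V, ⟪a, J b⟫ = -⟪b, J a⟫ := by
    intro a b
    rw [real_inner_comm, hJskew]
  have hC : ∀ a b : V, ⟪a, J (projD D b)⟫ = -⟪b, J (projD D a)⟫ := by
    intro a b
    rw [real_inner_comm, hJskew, inner_projD_left, ← hpJ, hpJ]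
  intro U Vv
  have hskew : ∀ X Y : V, ⟪PhiT J D U Vv X, Y⟫ = -⟪X, PhiT J D U Vv Y⟫ := by
    intro X Y
    simp only [PhiT, omForm, hForm_eq, hpJ, real_inner_smul_left, real_inner_smul_right,
      inner_add_left, inner_add_right, inner_sub_left, inner_sub_right,
      inner_projD_left, hJskew, inner_neg_left, inner_neg_right, map_neg, hJ2,
      LinearMap.map_smul, map_add, map_sub, projD_idem]
    simp only [hA Vv X, hA U X, hA Vv U, hB Vv X, hB U X, hB Vv U, hC Vv X, hC U X, hC Vv U,
      real_inner_comm Vv X, real_inner_comm U X]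
    ring
  have hcomm : ∀ W : V, PhiT J D U Vv (J W) = J (PhiT J D U Vv W) := by
    intro W
    simp only [PhiT, omForm, hForm_eq, hpJ, hJ2, LinearMap.map_smul, map_add, map_sub,
      map_neg, real_inner_smul_left, real_inner_smul_right, inner_neg_left, inner_neg_right,
      hJskew, inner_projD_left, projD_idem, hJg, smul_neg, neg_neg]
    simp only [PhiT, omForm, hForm_eq, hpJ, hJ2, LinearMap.map_smul, map_add, map_sub,
      map_neg, real_inner_smul_left, real_inner_smul_right, inner_neg_left, inner_neg_right,
      hJskew, inner_projD_left, projD_idem, hJg, smul_neg, neg_neg, projD_neg]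
    module
  refine ⟨hskew, hcomm, ?_⟩
  intro X Y
  simp only [der2]
  rw [← hcomm, hskew]
  ring
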